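/- Let 0<α₁<α₂, h>0, and take parameters (α₀,α₁,α₂,α₃)=(α₁,α₁,α₂,α₂). Let j₁>0, j₂>0 satisfy j₁/√α₁+j₂/√α₂=√(2h). Put s=1−j₂/√(2hα₂) (so 0<s<1), a=√(α₁s), c=√(2hs), b=(α₂/(2h))^{1/4}√j₂, d=(2h/α₂)^{1/4}√j₂. Then the set {(x,y)∈ℝ⁴×ℝ⁴ : C₁(x)=0, C₂(x,y)=0, H(x,y)=h, J₁(x,y)=j₁, J₂(x,y)=j₂} equals the two-torus {((a·cosθ₁, a·sinθ₁, b·cosθ₂, b·sinθ₂), (−c·sinθ₁, c·cosθ₁, −d·sinθ₂, d·cosθ₂)) : θ₁,θ₂∈ℝ}, where H=½(y₀²+y₁²+y₂²+y₃²), J₁=x₀y₁−x₁y₀, J₂=x₂y₃−x₃y₂. -/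

import Mathlib

noncomputable section

/-- Points of `T*ℝⁿ = ℝⁿ × ℝⁿ`, written `(x, y)`. -/
abbrev Pt (n : ℕ) := (Fin n → ℝ) × (Fin n → ℝ)

/-- `D(x) = Σᵢ xᵢ²/αᵢ²`. -/
def Dq {n : ℕ} (α : Fin n → ℝ) (x : Fin n → ℝ) : ℝ := ∑ i, (x i)^2 / (α i)^2

/-- Partial derivative of `f` in the direction `xᵢ`. -/
def pdx {n : ℕ} (f : Pt n → ℝ) (p : Pt n) (i : Fin n) : ℝ :=
  fderiv ℝ f p (Pi.single i 1, 0)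

/-- Partial derivative of `f` in the direction `yᵢ`. -/
def pdy {n : ℕ} (f : Pt n → ℝ) (p : Pt n) (i : Fin n) : ℝ :=
  fderiv ℝ f p (0, Pi.single i 1)

/-- The Dirac bracket on `T*ℝⁿ` for the ellipsoid with semi-axes `√(αᵢ)`:
`{f,g} = Σᵢₖ (∂f/∂xᵢ ∂g/∂yₖ − ∂g/∂xᵢ ∂f/∂yₖ)(δᵢₖ − xᵢxₖ/(D αᵢ αₖ))
        − Σᵢₖ (∂f/∂yᵢ)(∂g/∂yₖ)(xᵢyₖ − xₖyᵢ)/(D αᵢ αₖ)`. -/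
def dirac {n : ℕ} (α : Fin n → ℝ) (f g : Pt n → ℝ) (p : Pt n) : ℝ :=
  (∑ i, ∑ k,
    (pdx f p i * pdy g p k - pdx g p i * pdy f p k) *
      ((if i = k then (1:ℝ) else 0) - p.1 i * p.1 k / (Dq α p.1 * α i * α k)))
  - ∑ i, ∑ k,
      pdy f p i * pdy g p k * (p.1 i * p.2 k - p.1 k * p.2 i) / (Dq α p.1 * α i * α k)

/-- The constraint `C₁(x) = Σᵢ xᵢ²/αᵢ − 1`. -/
def C1 {n : ℕ} (α : Fin n → ℝ) (x : Fin n → ℝ) : ℝ := (∑ i, (x i)^2 / α i) - 1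

/-- The constraint `C₂(x,y) = Σᵢ xᵢyᵢ/αᵢ`. -/
def C2 {n : ℕ} (α : Fin n → ℝ) (p : Pt n) : ℝ := ∑ i, p.1 i * p.2 i / α i

/-- The Hamiltonian `H = ½(y₀² + y₁² + y₂² + y₃²)`. -/
def H4 (p : Pt 4) : ℝ := (1/2) * ((p.2 0)^2 + (p.2 1)^2 + (p.2 2)^2 + (p.2 3)^2)

/-- The angular momentum `J₁ = x₀y₁ − x₁y₀`. -/
def Jmom1 (p : Pt 4) : ℝ := p.1 0 * p.2 1 - p.1 1 * p.2 0

/-- The angular momentum `J₂ = x₂y₃ − x₃y₂`. -/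
def Jmom2 (p : Pt 4) : ℝ := p.1 2 * p.2 3 - p.1 3 * p.2 2



/-- square-injectivity on nonnegatives -/
lemma sq_inj' {x y : ℝ} (hx : 0 ≤ x) (hy : 0 ≤ y) (hxy : x^2 = y^2) : x = y := by
  rw [← Real.sqrt_sq hx, hxy, Real.sqrt_sq hy]

lemma circle_param (u v : ℝ) (huv : u^2 + v^2 = 1) :
    ∃ θ : ℝ, Real.cos θ = u ∧ Real.sin θ = v := by
  have h1 : -1 ≤ u := by nlinarith
  have h2 : u ≤ 1 := by nlinarith
  rcases le_or_gt 0 v with hv | hv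
  · refine ⟨Real.arccos u, Real.cos_arccos h1 h2, ?_⟩
    rw [Real.sin_arccos, show 1 - u^2 = v^2 by linarith, Real.sqrt_sq hv]
  · refine ⟨-Real.arccos u, by rw [Real.cos_neg]; exact Real.cos_arccos h1 h2, ?_⟩
    rw [Real.sin_neg, Real.sin_arccos, show 1 - u^2 = v^2 by linarith,
      Real.sqrt_sq_eq_abs, abs_of_neg hv]; ring

set_option maxHeartbeats 1600000 in
lemma stmt8core (α₁ α₂ h j₁ j₂ u v P Q s1 s2 : ℝ)
    (hα₁ : 0 < α₁) (hα₂ : 0 < α₂) (hh : 0 < h) (hj₁ : 0 < j₁) (hj₂ : 0 < j₂)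
    (hu : 0 ≤ u) (hv : 0 ≤ v) (hP : 0 ≤ P) (hQ : 0 ≤ Q)
    (hedge : j₁ / Real.sqrt α₁ + j₂ / Real.sqrt α₂ = Real.sqrt (2 * h))
    (E1 : u / α₁ + v / α₂ = 1) (E2 : s1 / α₁ + s2 / α₂ = 0) (E3 : P + Q = 2 * h)
    (L1 : j₁^2 + s1^2 = u * P) (L2 : j₂^2 + s2^2 = v * Q) :
    s1 = 0 ∧ s2 = 0 ∧ v * (Real.sqrt (2*h) * Real.sqrt α₂) = α₂ * j₂ ∧
      Q * (Real.sqrt (2*h) * Real.sqrt α₂) = (2*h) * j₂ := by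
  have h2h : (0:ℝ) < 2 * h := by linarith
  have sa1 : 0 < Real.sqrt α₁ := Real.sqrt_pos.mpr hα₁
  have sa2 : 0 < Real.sqrt α₂ := Real.sqrt_pos.mpr hα₂
  have s2h : 0 < Real.sqrt (2*h) := Real.sqrt_pos.mpr h2h
  have haa : Real.sqrt α₂ ^ 2 = α₂ := Real.sq_sqrt hα₂.le
  have ha1 : Real.sqrt α₁ ^ 2 = α₁ := Real.sq_sqrt hα₁.le
  have hhh : Real.sqrt (2*h) ^ 2 = 2*h := Real.sq_sqrt h2h.le
  obtain ⟨X2, hX2⟩ : ∃ X2, X2 = u / α₁ := ⟨_, rfl⟩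
  obtain ⟨Y2, hY2⟩ : ∃ Y2, Y2 = v / α₂ := ⟨_, rfl⟩
  obtain ⟨A, hA⟩ : ∃ A, A = j₁ / Real.sqrt α₁ := ⟨_, rfl⟩
  obtain ⟨B, hB⟩ : ∃ B, B = j₂ / Real.sqrt α₂ := ⟨_, rfl⟩
  rw [← hA, ← hB] at hedge
  rw [← hX2, ← hY2] at E1
  have hApos : 0 < A := hA ▸ div_pos hj₁ sa1
  have hBpos : 0 < B := hB ▸ div_pos hj₂ sa2
  have hX2n : 0 ≤ X2 := hX2 ▸ by positivity
  have hY2n : 0 ≤ Y2 := hY2 ▸ by positivity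
  have hABsq : (A + B)^2 = 2*h := by rw [hedge]; exact hhh
  have h1 : A^2 + s1^2/α₁ = X2 * P := by
    rw [hA, hX2, div_pow, ha1, ← add_div, L1]
    ring
  have h2 : B^2 + s2^2/α₂ = Y2 * Q := by
    rw [hB, hY2, div_pow, haa, ← add_div, L2]
    ring
  have key1 : A ≤ Real.sqrt (X2 * P) := by
    rw [Real.le_sqrt hApos.le (mul_nonneg hX2n hP)]
    nlinarith [div_nonneg (sq_nonneg s1) hα₁.le]
  have key2 : B ≤ Real.sqrt (Y2 * Q) := by
    rw [Real.le_sqrt hBpos.le (mul_nonneg hY2n hQ)]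
    nlinarith [div_nonneg (sq_nonneg s2) hα₂.le]
  have prod : Real.sqrt (X2*P) * Real.sqrt (Y2*Q)
      = Real.sqrt (X2*Q) * Real.sqrt (Y2*P) := by
    rw [← Real.sqrt_mul (mul_nonneg hX2n hP), ← Real.sqrt_mul (mul_nonneg hX2n hQ)]
    congr 1
    ring
  have amgm : 2 * (Real.sqrt (X2*Q) * Real.sqrt (Y2*P)) ≤ X2*Q + Y2*P := by
    have t := two_mul_le_add_sq (Real.sqrt (X2*Q)) (Real.sqrt (Y2*P))
    rw [Real.sq_sqrt (mul_nonneg hX2n hQ), Real.sq_sqrt (mul_nonneg hY2n hP)] at t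
    linarith
  have chain : 2*A*B ≤ X2*Q + Y2*P := by
    have hm : A * B ≤ Real.sqrt (X2*P) * Real.sqrt (Y2*Q) :=
      mul_le_mul key1 key2 hBpos.le (Real.sqrt_nonneg _)
    rw [prod] at hm
    linarith
  have tsum : (X2*P - A^2) + (Y2*Q - B^2) + (X2*Q + Y2*P - 2*A*B) = 0 := by
    linear_combination (P + Q) * E1 + E3 - hABsq
  have t1 : X2*P - A^2 = s1^2/α₁ := by linarith
  have t2 : Y2*Q - B^2 = s2^2/α₂ := by linarith
  have z1 : s1^2/α₁ = 0 := by
    have n1 : 0 ≤ s1^2/α₁ := by positivity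
    have n2 : 0 ≤ s2^2/α₂ := by positivity
    linarith
  have z2 : s2^2/α₂ = 0 := by
    have n1 : 0 ≤ s1^2/α₁ := by positivity
    have n2 : 0 ≤ s2^2/α₂ := by positivity
    linarith
  have hs1 : s1 = 0 := by field_simp at z1; simpa using z1
  have hs2 : s2 = 0 := by field_simp at z2; simpa using z2
  have hA2' : A^2 = X2*P := by rw [hs1] at h1; simpa using h1
  have hB2' : B^2 = Y2*Q := by rw [hs2] at h2; simpa using h2
  have heq3 : X2*Q + Y2*P = 2*A*B := by linarith
  have hmn0 : (X2*Q - Y2*P)^2 = 0 := by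
    linear_combination (X2*Q + Y2*P + 2*A*B) * heq3 + 4*B^2*hA2' + 4*(X2*P)*hB2'
  have hmn : X2*Q = Y2*P := by
    have := sq_eq_zero_iff.mp hmn0; linarith
  have hXY : X2 + Y2 = 1 := E1
  have hQ2 : Q = 2*h*Y2 := by linear_combination (-Q)*hXY + hmn + Y2*E3
  have hYB : Y2 = B / Real.sqrt (2*h) := by
    apply sq_inj' hY2n (le_of_lt (div_pos hBpos s2h))
    rw [div_pow, hhh]
    have : B^2 = 2*h*Y2^2 := by rw [hB2', hQ2]; ring
    field_simp [this]
    linarith [this]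
  constructor; · exact hs1
  constructor; · exact hs2
  have hvY : v = α₂ * Y2 := by rw [hY2]; field_simp
  obtain ⟨R, hR⟩ : ∃ R, R = Real.sqrt (2*h) := ⟨_, rfl⟩
  obtain ⟨S, hS⟩ : ∃ S, S = Real.sqrt α₂ := ⟨_, rfl⟩
  have hRne : R ≠ 0 := by rw [hR]; exact s2h.ne'
  have hSne : S ≠ 0 := by rw [hS]; exact sa2.ne'
  have hRR : R^2 = 2*h := by rw [hR]; exact hhh
  have hSS : S^2 = α₂ := by rw [hS]; exact haa
  constructor
  · rw [hvY, hYB, hB, ← hR, ← hS]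
    field_simp
  · rw [hQ2, hYB, hB, ← hR, ← hS]
    field_simp

set_option maxHeartbeats 4000000 in
/-- the fiber of the energy-momentum map over an edge point
`(h, j₁, j₂)` with `j₁/√α₁ + j₂/√α₂ = √(2h)`, `j₁, j₂ > 0`, is a single 2-torus:
the `SO(2)×SO(2)` orbit of an explicit point. Here `s = 1 − j₂/√(2hα₂)` satisfies
`0 < s < 1` and `a = √(α₁s)`, `c = √(2hs)`, `b = (α₂/2h)^{1/4}√j₂`,
`d = (2h/α₂)^{1/4}√j₂`. -/
theorem stmt8 (α₁ α₂ h j₁ j₂ : ℝ) (hα₁ : 0 < α₁) (hα₁₂ : α₁ < α₂) (hh : 0 < h)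
    (hj₁ : 0 < j₁) (hj₂ : 0 < j₂)
    (hedge : j₁ / Real.sqrt α₁ + j₂ / Real.sqrt α₂ = Real.sqrt (2 * h)) :
    (0 < 1 - j₂ / Real.sqrt (2 * h * α₂) ∧ 1 - j₂ / Real.sqrt (2 * h * α₂) < 1) ∧
    {p : Pt 4 | C1 ![α₁, α₁, α₂, α₂] p.1 = 0 ∧ C2 ![α₁, α₁, α₂, α₂] p = 0 ∧
      H4 p = h ∧ Jmom1 p = j₁ ∧ Jmom2 p = j₂}
    = {p : Pt 4 | ∃ θ₁ θ₂ : ℝ,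
        p = (![Real.sqrt (α₁ * (1 - j₂ / Real.sqrt (2 * h * α₂))) * Real.cos θ₁,
               Real.sqrt (α₁ * (1 - j₂ / Real.sqrt (2 * h * α₂))) * Real.sin θ₁,
               (α₂ / (2 * h)) ^ ((1:ℝ)/4) * Real.sqrt j₂ * Real.cos θ₂,
               (α₂ / (2 * h)) ^ ((1:ℝ)/4) * Real.sqrt j₂ * Real.sin θ₂],
             ![-(Real.sqrt (2 * h * (1 - j₂ / Real.sqrt (2 * h * α₂))) * Real.sin θ₁),
               Real.sqrt (2 * h * (1 - j₂ / Real.sqrt (2 * h * α₂))) * Real.cos θ₁,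
               -((2 * h / α₂) ^ ((1:ℝ)/4) * Real.sqrt j₂ * Real.sin θ₂),
               (2 * h / α₂) ^ ((1:ℝ)/4) * Real.sqrt j₂ * Real.cos θ₂])} := by
  have hα₂ : 0 < α₂ := lt_trans hα₁ hα₁₂
  have h2h : (0:ℝ) < 2 * h := by linarith
  have sa1 : 0 < Real.sqrt α₁ := Real.sqrt_pos.mpr hα₁
  have sa2 : 0 < Real.sqrt α₂ := Real.sqrt_pos.mpr hα₂
  have s2h : 0 < Real.sqrt (2 * h) := Real.sqrt_pos.mpr h2h
  have hsplit : Real.sqrt (2 * h * α₂) = Real.sqrt (2 * h) * Real.sqrt α₂ :=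
    Real.sqrt_mul h2h.le _
  have haa : Real.sqrt α₂ ^ 2 = α₂ := Real.sq_sqrt hα₂.le
  have ha1s : Real.sqrt α₁ ^ 2 = α₁ := Real.sq_sqrt hα₁.le
  have hhh : Real.sqrt (2 * h) ^ 2 = 2 * h := Real.sq_sqrt h2h.le
  set s := 1 - j₂ / Real.sqrt (2 * h * α₂) with hs_def
  clear_value s
  have h1s : 1 - s = j₂ / (Real.sqrt (2 * h) * Real.sqrt α₂) := by
    rw [hs_def, hsplit]; ring
  have h1s' : 1 - s = j₂ / Real.sqrt (2 * h * α₂) := by rw [hs_def]; ring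
  have hBlt : j₂ / Real.sqrt α₂ < Real.sqrt (2 * h) := by
    have h0 : 0 < j₁ / Real.sqrt α₁ := div_pos hj₁ sa1
    linarith [hedge]
  have hs0 : 0 < s := by
    have hlt : j₂ / (Real.sqrt (2 * h) * Real.sqrt α₂) < 1 := by
      rw [div_lt_one (by positivity)]
      calc j₂ = j₂ / Real.sqrt α₂ * Real.sqrt α₂ := by field_simp
        _ < Real.sqrt (2 * h) * Real.sqrt α₂ := mul_lt_mul_of_pos_right hBlt sa2
    linarith [h1s]
  have hs1lt : s < 1 := by
    have : 0 < j₂ / (Real.sqrt (2 * h) * Real.sqrt α₂) := div_pos hj₂ (by positivity)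
    linarith [h1s]
  set a := Real.sqrt (α₁ * s) with ha_def
  set b := (α₂ / (2 * h)) ^ ((1:ℝ)/4) * Real.sqrt j₂ with hb_def
  set c := Real.sqrt (2 * h * s) with hc_def
  set d := (2 * h / α₂) ^ ((1:ℝ)/4) * Real.sqrt j₂ with hd_def
  clear_value a b c d
  have ha0 : 0 < a := by rw [ha_def]; exact Real.sqrt_pos.mpr (mul_pos hα₁ hs0)
  have hc0 : 0 < c := by rw [hc_def]; exact Real.sqrt_pos.mpr (mul_pos h2h hs0)
  have hb0 : 0 < b := by
    rw [hb_def]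
    exact mul_pos (Real.rpow_pos_of_pos (div_pos hα₂ h2h) _) (Real.sqrt_pos.mpr hj₂)
  have hd0 : 0 < d := by
    rw [hd_def]
    exact mul_pos (Real.rpow_pos_of_pos (div_pos h2h hα₂) _) (Real.sqrt_pos.mpr hj₂)
  have ha2 : a ^ 2 = α₁ * s := by rw [ha_def]; exact Real.sq_sqrt (mul_pos hα₁ hs0).le
  have hc2 : c ^ 2 = 2 * h * s := by rw [hc_def]; exact Real.sq_sqrt (mul_pos h2h hs0).le
  have hq4 : ∀ x : ℝ, 0 < x → (x ^ ((1:ℝ)/4)) ^ 2 = Real.sqrt x := by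
    intro x hx
    rw [← Real.rpow_natCast (x ^ ((1:ℝ)/4)) 2, ← Real.rpow_mul hx.le, Real.sqrt_eq_rpow]
    norm_num
  have hb2 : b ^ 2 = α₂ * (1 - s) := by
    have e : b ^ 2 = α₂ / Real.sqrt (2 * h * α₂) * j₂ := by
      rw [hb_def, mul_pow, hq4 _ (div_pos hα₂ h2h), Real.sq_sqrt hj₂.le,
        show α₂ / (2 * h) = α₂ ^ 2 / (2 * h * α₂) by field_simp,
        Real.sqrt_div (sq_nonneg α₂), Real.sqrt_sq hα₂.le]
    rw [e, h1s']; ring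
  have hd2 : d ^ 2 = 2 * h * (1 - s) := by
    have e : d ^ 2 = (2 * h) / Real.sqrt (2 * h * α₂) * j₂ := by
      rw [hd_def, mul_pow, hq4 _ (div_pos h2h hα₂), Real.sq_sqrt hj₂.le,
        show 2 * h / α₂ = (2 * h) ^ 2 / (2 * h * α₂) by field_simp,
        Real.sqrt_div (sq_nonneg (2 * h)), Real.sqrt_sq h2h.le]
    rw [e, h1s']; ring
  have e2X : Real.sqrt (2 * h) * (1 - s) = j₂ / Real.sqrt α₂ := by
    rw [h1s, mul_div_assoc']
    exact mul_div_mul_left _ _ s2h.ne'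
  have e3X : j₁ / Real.sqrt α₁ = Real.sqrt (2 * h) * s := by
    linear_combination hedge + e2X
  have hj1' : j₁ = Real.sqrt (2 * h) * s * Real.sqrt α₁ := by
    rw [div_eq_iff sa1.ne'] at e3X; exact e3X
  have hj1sq : j₁ ^ 2 = α₁ * (2 * h) * s ^ 2 := by
    rw [hj1', mul_pow, mul_pow, ha1s, hhh]; ring
  have hac : a * c = j₁ := by
    apply sq_inj' (mul_pos ha0 hc0).le hj₁.le
    rw [mul_pow, ha2, hc2, hj1sq]; ring
  have hbd : b * d = j₂ := by
    have h1 : (α₂ / (2 * h)) ^ ((1:ℝ)/4) * ((2 * h) / α₂) ^ ((1:ℝ)/4) = 1 := by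
      rw [← Real.mul_rpow (div_pos hα₂ h2h).le (div_pos h2h hα₂).le,
        show α₂ / (2 * h) * ((2 * h) / α₂) = 1 by field_simp, Real.one_rpow]
    calc b * d = ((α₂ / (2 * h)) ^ ((1:ℝ)/4) * ((2 * h) / α₂) ^ ((1:ℝ)/4)) *
        (Real.sqrt j₂ * Real.sqrt j₂) := by rw [hb_def, hd_def]; ring
      _ = j₂ := by rw [h1, Real.mul_self_sqrt hj₂.le, one_mul]
  have hX : (1 - s) * (Real.sqrt (2 * h) * Real.sqrt α₂) = j₂ := by
    rw [h1s]; exact div_mul_cancel₀ _ (by positivity)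
  refine ⟨⟨hs0, hs1lt⟩, ?_⟩
  ext p
  simp only [Set.mem_setOf_eq]
  constructor
  · rintro ⟨e1, e2, e3, e4, e5⟩
    simp only [C1, C2, Fin.sum_univ_four, Matrix.cons_val_zero, Matrix.cons_val_one,
      Matrix.head_cons, Matrix.cons_val_two, Matrix.tail_cons, Matrix.cons_val_three] at e1 e2
    simp only [H4] at e3
    simp only [Jmom1] at e4
    simp only [Jmom2] at e5
    have E1 : (p.1 0 ^ 2 + p.1 1 ^ 2) / α₁ + (p.1 2 ^ 2 + p.1 3 ^ 2) / α₂ = 1 := by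
      linear_combination e1
    have E2 : (p.1 0 * p.2 0 + p.1 1 * p.2 1) / α₁ +
        (p.1 2 * p.2 2 + p.1 3 * p.2 3) / α₂ = 0 := by linear_combination e2
    have E3 : (p.2 0 ^ 2 + p.2 1 ^ 2) + (p.2 2 ^ 2 + p.2 3 ^ 2) = 2 * h := by
      linear_combination 2 * e3
    have L1 : j₁ ^ 2 + (p.1 0 * p.2 0 + p.1 1 * p.2 1) ^ 2 =
        (p.1 0 ^ 2 + p.1 1 ^ 2) * (p.2 0 ^ 2 + p.2 1 ^ 2) := by
      linear_combination (-(p.1 0 * p.2 1 - p.1 1 * p.2 0) - j₁) * e4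
    have L2 : j₂ ^ 2 + (p.1 2 * p.2 2 + p.1 3 * p.2 3) ^ 2 =
        (p.1 2 ^ 2 + p.1 3 ^ 2) * (p.2 2 ^ 2 + p.2 3 ^ 2) := by
      linear_combination (-(p.1 2 * p.2 3 - p.1 3 * p.2 2) - j₂) * e5
    obtain ⟨hs1, hs2, hv, hQ⟩ :=
      stmt8core α₁ α₂ h j₁ j₂ _ _ _ _ _ _ hα₁ hα₂ hh hj₁ hj₂
        (by positivity) (by positivity) (by positivity) (by positivity)
        hedge E1 E2 E3 L1 L2
    have hbv : b ^ 2 * (Real.sqrt (2 * h) * Real.sqrt α₂) = α₂ * j₂ := by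
      rw [hb2]; linear_combination α₂ * hX
    have hdv : d ^ 2 * (Real.sqrt (2 * h) * Real.sqrt α₂) = (2 * h) * j₂ := by
      rw [hd2]; linear_combination (2 * h) * hX
    have hveq : p.1 2 ^ 2 + p.1 3 ^ 2 = b ^ 2 :=
      mul_right_cancel₀ (by positivity : Real.sqrt (2*h) * Real.sqrt α₂ ≠ 0)
        (hv.trans hbv.symm)
    have hQeq : p.2 2 ^ 2 + p.2 3 ^ 2 = d ^ 2 :=
      mul_right_cancel₀ (by positivity : Real.sqrt (2*h) * Real.sqrt α₂ ≠ 0)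
        (hQ.trans hdv.symm)
    have hb2' : p.1 2 ^ 2 + p.1 3 ^ 2 = α₂ - α₂ * s := by rw [hveq, hb2]; ring
    have hu' : p.1 0 ^ 2 + p.1 1 ^ 2 = a ^ 2 := by
      rw [ha2]
      apply mul_right_cancel₀ hα₂.ne'
      have E1' : (p.1 0 ^ 2 + p.1 1 ^ 2) * α₂ + (p.1 2 ^ 2 + p.1 3 ^ 2) * α₁ = α₁ * α₂ := by
        field_simp at E1
        linarith [E1]
      linear_combination E1' - α₁ * hb2'
    have hP' : p.2 0 ^ 2 + p.2 1 ^ 2 = c ^ 2 := by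
      rw [hc2]
      linear_combination E3 - hQeq - hd2
    have hy0 : a ^ 2 * p.2 0 = -(a * c * p.1 1) := by
      linear_combination (-(p.2 0)) * hu' + p.1 0 * hs1 + (-(p.1 1)) * e4 + p.1 1 * hac
    have hy1 : a ^ 2 * p.2 1 = a * c * p.1 0 := by
      linear_combination (-(p.2 1)) * hu' + p.1 1 * hs1 + p.1 0 * e4 + (-(p.1 0)) * hac
    have hy2 : b ^ 2 * p.2 2 = -(b * d * p.1 3) := by
      linear_combination (-(p.2 2)) * hveq + p.1 2 * hs2 + (-(p.1 3)) * e5 + p.1 3 * hbd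
    have hy3 : b ^ 2 * p.2 3 = b * d * p.1 2 := by
      linear_combination (-(p.2 3)) * hveq + p.1 3 * hs2 + p.1 2 * e5 + (-(p.1 2)) * hbd
    obtain ⟨θ₁, hcos1, hsin1⟩ := circle_param (p.1 0 / a) (p.1 1 / a)
      (by field_simp; linear_combination hu')
    obtain ⟨θ₂, hcos2, hsin2⟩ := circle_param (p.1 2 / b) (p.1 3 / b)
      (by field_simp; linear_combination hveq)
    refine ⟨θ₁, θ₂, ?_⟩
    have hfst : p.1 = ![a * Real.cos θ₁, a * Real.sin θ₁,
        b * Real.cos θ₂, b * Real.sin θ₂] := by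
      funext i
      fin_cases i
      · show p.1 0 = a * Real.cos θ₁
        rw [hcos1]; field_simp
      · show p.1 1 = a * Real.sin θ₁
        rw [hsin1]; field_simp
      · show p.1 2 = b * Real.cos θ₂
        rw [hcos2]; field_simp
      · show p.1 3 = b * Real.sin θ₂
        rw [hsin2]; field_simp
    have hsnd : p.2 = ![-(c * Real.sin θ₁), c * Real.cos θ₁,
        -(d * Real.sin θ₂), d * Real.cos θ₂] := by
      funext i
      fin_cases i
      · show p.2 0 = -(c * Real.sin θ₁)
        rw [hsin1]
        have e : a ^ 2 * (-(c * (p.1 1 / a))) = -(a * c * p.1 1) := by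
          field_simp
        exact mul_left_cancel₀ (pow_ne_zero 2 ha0.ne') (hy0.trans e.symm)
      · show p.2 1 = c * Real.cos θ₁
        rw [hcos1]
        have e : a ^ 2 * (c * (p.1 0 / a)) = a * c * p.1 0 := by
          field_simp
        exact mul_left_cancel₀ (pow_ne_zero 2 ha0.ne') (hy1.trans e.symm)
      · show p.2 2 = -(d * Real.sin θ₂)
        rw [hsin2]
        have e : b ^ 2 * (-(d * (p.1 3 / b))) = -(b * d * p.1 3) := by
          field_simp
        exact mul_left_cancel₀ (pow_ne_zero 2 hb0.ne') (hy2.trans e.symm)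
      · show p.2 3 = d * Real.cos θ₂
        rw [hcos2]
        have e : b ^ 2 * (d * (p.1 2 / b)) = b * d * p.1 2 := by
          field_simp
        exact mul_left_cancel₀ (pow_ne_zero 2 hb0.ne') (hy3.trans e.symm)
    rw [Prod.ext_iff]
    exact ⟨hfst, hsnd⟩
  · rintro ⟨θ₁, θ₂, rfl⟩
    have t1 := Real.sin_sq_add_cos_sq θ₁
    have t2 := Real.sin_sq_add_cos_sq θ₂
    simp only [C1, C2, H4, Jmom1, Jmom2, Fin.sum_univ_four, Matrix.cons_val_zero,
      Matrix.cons_val_one, Matrix.head_cons, Matrix.cons_val_two, Matrix.tail_cons,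
      Matrix.cons_val_three]
    refine ⟨?_, ?_, ?_, ?_, ?_⟩
    · linear_combination ((Real.cos θ₁ ^ 2 + Real.sin θ₁ ^ 2) / α₁) * ha2 +
        ((Real.cos θ₂ ^ 2 + Real.sin θ₂ ^ 2) / α₂) * hb2 +
        s * (Real.cos θ₁ ^ 2 + Real.sin θ₁ ^ 2) * (mul_inv_cancel₀ hα₁.ne') +
        (1 - s) * (Real.cos θ₂ ^ 2 + Real.sin θ₂ ^ 2) * (mul_inv_cancel₀ hα₂.ne') +
        s * t1 + (1 - s) * t2
    · ring
    · linear_combination (1/2) * (Real.sin θ₁ ^ 2 + Real.cos θ₁ ^ 2) * hc2 +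
        (1/2) * (Real.sin θ₂ ^ 2 + Real.cos θ₂ ^ 2) * hd2 + h * s * t1 + h * (1 - s) * t2
    · linear_combination a * c * t1 + hac
    · linear_combination b * d * t2 + hbd
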